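/- For the maximally coherent state ρ = (1/d) Σ_{i,j=0}^{d-1} |i⟩⟨j| on ℂ^d, the minimal trace-norm distance from ρ to the set of diagonal density matrices equals 2 − 2/d. -/

import Mathlib

open Matrix
open scoped ComplexOrder

/-- The trace norm ‖M‖₁ = Tr√(M†M). -/
noncomputable def traceNorm {n : Type*} [Fintype n] [DecidableEq n]
    (M : Matrix n n ℂ) : ℝ :=
  (((Matrix.posSemidef_conjTranspose_mul_self M).1.eigenvectorUnitary.1 *
      Matrix.diagonal (((↑) : ℝ → ℂ) ∘ (Real.sqrt ∘ (Matrix.posSemidef_conjTranspose_mul_self M).1.eigenvalues)) *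
      (star (Matrix.posSemidef_conjTranspose_mul_self M).1.eigenvectorUnitary : Matrix n n ℂ)).trace).re

/-- A density matrix: positive semidefinite with unit trace. -/
def IsDensity {n : Type*} [Fintype n] (ρ : Matrix n n ℂ) : Prop :=
  ρ.PosSemidef ∧ ρ.trace = 1

lemma cs_helper (d : ℕ) (v : Fin d → ℂ) :
    Complex.normSq (∑ i, v i) ≤ d * ∑ i, Complex.normSq (v i) := by
  have h1 : ‖∑ i, v i‖ ≤ ∑ i, ‖v i‖ := norm_sum_le _ _
  have h2 : (∑ i, ‖v i‖) ^ 2 ≤ (Fintype.card (Fin d) : ℝ) * ∑ i, ‖v i‖ ^ 2 := by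
    simpa using sq_sum_le_card_mul_sum_sq (s := Finset.univ) (f := fun i => ‖v i‖)
  have h3 : ‖∑ i, v i‖ ^ 2 ≤ (∑ i, ‖v i‖) ^ 2 :=
    pow_le_pow_left₀ (norm_nonneg _) h1 2
  have e1 : ∀ z : ℂ, Complex.normSq z = ‖z‖ ^ 2 := fun z => by
    rw [← Complex.sq_norm]
  calc Complex.normSq (∑ i, v i) = ‖∑ i, v i‖ ^ 2 := e1 _
    _ ≤ (∑ i, ‖v i‖) ^ 2 := h3
    _ ≤ (Fintype.card (Fin d) : ℝ) * ∑ i, ‖v i‖ ^ 2 := h2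
    _ = d * ∑ i, Complex.normSq (v i) := by
        rw [Fintype.card_fin]
        congr 1
        exact Finset.sum_congr rfl fun i _ => (e1 (v i)).symm

lemma quadJ (d : ℕ) (v : Fin d → ℂ) :
    star v ⬝ᵥ (Matrix.of fun _ _ : Fin d => (1 : ℂ)) *ᵥ v
      = (Complex.normSq (∑ i, v i) : ℂ) := by
  simp only [dotProduct, mulVec, Matrix.of_apply, Pi.star_apply, one_mul,
    Complex.normSq_eq_conj_mul_self, map_sum, Finset.sum_mul]
  rfl

lemma quadI (d : ℕ) (v : Fin d → ℂ) :
    star v ⬝ᵥ v = ((∑ i, Complex.normSq (v i) : ℝ) : ℂ) := by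
  simp [dotProduct, Complex.normSq_eq_conj_mul_self]

lemma traceNorm_eq_retrace {n : Type*} [Fintype n] [DecidableEq n]
    (M S : Matrix n n ℂ) (hS : S.PosSemidef) (h : S ^ 2 = Mᴴ * M) :
    traceNorm M = S.trace.re := by
  have hH := (Matrix.posSemidef_conjTranspose_mul_self M).1
  have e : traceNorm M = (hH.cfc Real.sqrt).trace.re := rfl
  have key : hH.cfc Real.sqrt = S := by
    rw [← hH.cfc_eq]
    simp only [← h]
    rw [← cfc_comp_pow Real.sqrt 2 S Real.continuous_sqrt.continuousOn hS.1.isSelfAdjoint]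
    conv_rhs => rw [← cfc_id ℝ S hS.1.isSelfAdjoint]
    refine cfc_congr fun x hx => ?_
    obtain ⟨i, rfl⟩ := hS.1.spectrum_real_eq_range_eigenvalues ▸ hx
    simp [Real.sqrt_sq (hS.eigenvalues_nonneg i)]
  rw [e, key]

lemma traceNorm_hermitian {n : Type*} [Fintype n] [DecidableEq n]
    (M : Matrix n n ℂ) (hM : M.IsHermitian) :
    traceNorm M = ∑ i, |hM.eigenvalues i| := by
  set U : Matrix n n ℂ := (hM.eigenvectorUnitary : Matrix n n ℂ) with hUdef
  have hUU : Uᴴ * U = 1 := by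
    rw [← star_eq_conjTranspose]
    exact mem_unitaryGroup_iff'.mp hM.eigenvectorUnitary.2
  have conj2 : ∀ v w : n → ℂ, (U * diagonal v * Uᴴ) * (U * diagonal w * Uᴴ)
      = U * diagonal (fun i => v i * w i) * Uᴴ := by
    intro v w
    simp only [Matrix.mul_assoc]
    rw [← Matrix.mul_assoc Uᴴ U, hUU, Matrix.one_mul, ← Matrix.mul_assoc (diagonal v),
        Matrix.diagonal_mul_diagonal]
  set f : n → ℂ := Complex.ofReal ∘ fun i => |hM.eigenvalues i| with hfdef
  set S : Matrix n n ℂ := U * diagonal f * Uᴴ with hSdef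
  have hSpsd : S.PosSemidef := by
    rw [hSdef]
    have : Uᴴ = star U := rfl
    rw [this]
    exact (Matrix.PosSemidef.diagonal (fun i => by
      simpa [hfdef] using Complex.zero_le_real.mpr
        (abs_nonneg (hM.eigenvalues i)))).mul_mul_conjTranspose_same U
  have hspec : M = U * diagonal (Complex.ofReal ∘ hM.eigenvalues) * Uᴴ :=
    hM.spectral_theorem
  have hsq : S ^ 2 = Mᴴ * M := by
    rw [hM.eq]
    conv_rhs => rw [hspec]
    rw [pow_two, hSdef, conj2, conj2]
    congr 2
    funext i
    simp [hfdef, Function.comp, ← Complex.ofReal_mul, abs_mul_abs_self]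
  rw [traceNorm_eq_retrace M S hSpsd hsq, hSdef, Matrix.trace_mul_cycle,
      hUU, Matrix.one_mul, Matrix.trace_diagonal]
  simp [hfdef]

lemma retrace_mul_le_traceNorm {n : Type*} [Fintype n] [DecidableEq n]
    (M A : Matrix n n ℂ) (hM : M.IsHermitian)
    (hA : ∀ v : n → ℂ, |(star v ⬝ᵥ A *ᵥ v).re| ≤ (star v ⬝ᵥ v).re) :
    ((M * A).trace).re ≤ traceNorm M := by
  set U : Matrix n n ℂ := (hM.eigenvectorUnitary : Matrix n n ℂ) with hUdef
  have hUU : Uᴴ * U = 1 := by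
    rw [← star_eq_conjTranspose]
    exact mem_unitaryGroup_iff'.mp hM.eigenvectorUnitary.2
  have hspec : M = U * diagonal (Complex.ofReal ∘ hM.eigenvalues) * Uᴴ :=
    hM.spectral_theorem
  have hdiag : ∀ i, (Uᴴ * A * U) i i = star (fun k => U k i) ⬝ᵥ A *ᵥ (fun k => U k i) := by
    intro i
    simp only [mul_apply, conjTranspose_apply, dotProduct, mulVec, Pi.star_apply,
      Finset.sum_mul, Finset.mul_sum]
    rw [Finset.sum_comm]
    congr 1; funext l; congr 1; funext k; ring
  have hnorm : ∀ i, (star (fun k => U k i) ⬝ᵥ (fun k => U k i) : ℂ) = 1 := by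
    intro i
    have := congrFun (congrFun hUU i) i
    simpa [mul_apply, conjTranspose_apply, dotProduct, one_apply] using this
  have htr : (M * A).trace = ∑ i, (hM.eigenvalues i : ℂ) * (Uᴴ * A * U) i i := by
    conv_lhs => rw [hspec]
    rw [Matrix.mul_assoc, Matrix.mul_assoc, Matrix.trace_mul_comm, Matrix.mul_assoc]
    simp [trace, diag, diagonal_mul]
  rw [traceNorm_hermitian M hM, htr]
  rw [Complex.re_sum]
  refine Finset.sum_le_sum fun i _ => ?_
  rw [hdiag i]
  set z := (star fun k => U k i) ⬝ᵥ A *ᵥ (fun k => U k i) with hz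
  have h1 : |z.re| ≤ 1 := by
    have := hA (fun k => U k i)
    rwa [hnorm i, Complex.one_re] at this
  rw [Complex.re_ofReal_mul]
  calc hM.eigenvalues i * z.re ≤ |hM.eigenvalues i * z.re| := le_abs_self _
    _ = |hM.eigenvalues i| * |z.re| := abs_mul _ _
    _ ≤ |hM.eigenvalues i| * 1 := mul_le_mul_of_nonneg_left h1 (abs_nonneg _)
    _ = |hM.eigenvalues i| := mul_one _

/-- For the maximally coherent state ρ = (1/d) Σ_{i,j} |i⟩⟨j| on ℂ^d, the minimal
trace-norm distance to the diagonal (incoherent) density matrices equals 2 − 2/d. -/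
theorem stmt_8 (d : ℕ) (hd : 0 < d) :
    IsLeast {x : ℝ | ∃ σ : Matrix (Fin d) (Fin d) ℂ,
        IsDensity σ ∧ σ.IsDiag ∧
        x = traceNorm ((Matrix.of fun _ _ : Fin d => (1 / d : ℂ)) - σ)}
      (2 - 2 / d) := by
  have hdC : (d : ℂ) ≠ 0 := Nat.cast_ne_zero.mpr hd.ne'
  have hdR : (0:ℝ) < (d : ℝ) := by exact_mod_cast hd
  set J : Matrix (Fin d) (Fin d) ℂ := Matrix.of fun _ _ => 1 with hJdef
  have hJJ : J * J = (d : ℂ) • J := by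
    ext i j; simp [hJdef, mul_apply]
  set ρ : Matrix (Fin d) (Fin d) ℂ := Matrix.of fun _ _ => (1 / d : ℂ) with hρdef
  have hρ : ρ = ((d : ℂ))⁻¹ • J := by
    ext i j; simp [hρdef, hJdef, one_div]
  have hJherm : Jᴴ = J := by ext i j; simp [hJdef]
  constructor
  · -- membership
    refine ⟨((d : ℂ))⁻¹ • 1, ⟨?_, ?_⟩, ?_, ?_⟩
    · -- PosSemidef
      have h1 : ((d : ℂ))⁻¹ • (1 : Matrix (Fin d) (Fin d) ℂ)
          = Matrix.diagonal (fun _ : Fin d => ((d : ℂ))⁻¹) := by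
        ext i j
        by_cases h : i = j <;> simp [h, Matrix.one_apply, Matrix.diagonal_apply]
      rw [h1]
      refine posSemidef_diagonal_iff.mpr fun i => ?_
      have : ((d : ℂ))⁻¹ = (((d : ℝ)⁻¹ : ℝ) : ℂ) := by push_cast; ring
      rw [this]
      exact Complex.zero_le_real.mpr (by positivity)
    · -- trace
      rw [Matrix.trace_smul, Matrix.trace_one, smul_eq_mul]
      simp only [Fintype.card_fin]
      exact inv_mul_cancel₀ hdC
    · -- IsDiag
      exact Matrix.isDiag_one.smul _
    · -- traceNorm value
      set a : ℝ := ((d : ℝ) - 2) / (d : ℝ) ^ 2 with hadef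
      set b : ℝ := ((d : ℝ))⁻¹ with hbdef
      set S : Matrix (Fin d) (Fin d) ℂ := (a : ℂ) • J + (b : ℂ) • 1 with hSdef
      set M : Matrix (Fin d) (Fin d) ℂ := ρ - ((d : ℂ))⁻¹ • 1 with hMdef
      have expand : ∀ x y : ℂ, ((x : ℂ) • J + y • 1) * ((x : ℂ) • J + y • 1)
          = (x * x * (d : ℂ) + 2 * x * y) • J + (y * y) • 1 := by
        intro x y
        simp only [add_mul, mul_add, smul_mul_assoc, mul_smul_comm, hJJ,
          Matrix.mul_one, Matrix.one_mul, smul_smul]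
        module
      have hMherm : Mᴴ = M := by
        rw [hMdef, hρ, conjTranspose_sub, conjTranspose_smul, conjTranspose_smul,
          conjTranspose_one, hJherm]
        congr 1 <;> simp
      have hM2 : M = ((d : ℂ))⁻¹ • J + (-(d : ℂ)⁻¹) • 1 := by
        rw [hMdef, hρ]; module
      have hsq : S ^ 2 = Mᴴ * M := by
        rw [hMherm, pow_two, hSdef, hM2, expand, expand]
        congr 2
        · push_cast [hadef, hbdef]
          field_simp
          ring
        · push_cast [hadef, hbdef]
          field_simp
      have hSpsd : S.PosSemidef := by
        refine Matrix.PosSemidef.of_dotProduct_mulVec_nonneg ?_ ?_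
        · show Sᴴ = S
          rw [hSdef, conjTranspose_add, conjTranspose_smul, conjTranspose_smul,
            conjTranspose_one, hJherm]
          congr 1 <;> simp [Complex.conj_ofReal]
        · intro x
          have hq : star x ⬝ᵥ S *ᵥ x
              = ((a * Complex.normSq (∑ i, x i) + b * ∑ i, Complex.normSq (x i) : ℝ) : ℂ) := by
            rw [hSdef, Matrix.add_mulVec, Matrix.smul_mulVec, Matrix.smul_mulVec,
              Matrix.one_mulVec, dotProduct_add, dotProduct_smul, dotProduct_smul,
              quadJ, quadI]
            push_cast [smul_eq_mul]
            ring
          rw [hq]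
          refine Complex.zero_le_real.mpr ?_
          have hcs := cs_helper d x
          have h0 : 0 ≤ Complex.normSq (∑ i, x i) := Complex.normSq_nonneg _
          have h0' : 0 ≤ ∑ i, Complex.normSq (x i) :=
            Finset.sum_nonneg fun i _ => Complex.normSq_nonneg _
          have hd1 : (1 : ℝ) ≤ (d : ℝ) := by exact_mod_cast hd
          rw [hadef, hbdef]
          set t := Complex.normSq (∑ i, x i)
          set u := ∑ i, Complex.normSq (x i)
          have key : 0 ≤ ((d : ℝ) - 2) * t + d * u := by nlinarith [hcs, h0, h0', hd1]
          have heq : ((d : ℝ) - 2) / (d : ℝ) ^ 2 * t + ((d : ℝ))⁻¹ * u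
              = (((d : ℝ) - 2) * t + d * u) / (d : ℝ) ^ 2 := by
            field_simp
          rw [heq]
          positivity
      have htr : S.trace = (((d : ℝ) * (a + b) : ℝ) : ℂ) := by
        rw [hSdef]
        simp [Matrix.trace_add, Matrix.trace_smul, Matrix.trace_one, Matrix.trace,
          Matrix.diag, hJdef]
        push_cast
        ring
      rw [traceNorm_eq_retrace M S hSpsd hsq, htr, Complex.ofReal_re, hadef, hbdef]
      field_simp
      ring
  · -- lower bound
    rintro x ⟨σ, ⟨hpsd, htr1⟩, hdiag, rfl⟩
    set M : Matrix (Fin d) (Fin d) ℂ := ρ - σ with hMdef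
    have hMherm : M.IsHermitian := by
      show Mᴴ = M
      rw [hMdef, conjTranspose_sub, hρ, conjTranspose_smul, hJherm, hpsd.1.eq]
      congr 1; simp
    set A : Matrix (Fin d) (Fin d) ℂ := (2 : ℂ) • ρ - 1 with hAdef
    have hA : ∀ v : Fin d → ℂ, |(star v ⬝ᵥ A *ᵥ v).re| ≤ (star v ⬝ᵥ v).re := by
      intro v
      have hval : star v ⬝ᵥ A *ᵥ v
          = ((2 * (d:ℝ)⁻¹ * Complex.normSq (∑ i, v i) - ∑ i, Complex.normSq (v i) : ℝ) : ℂ) := by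
        rw [hAdef, Matrix.sub_mulVec, Matrix.smul_mulVec, Matrix.one_mulVec,
          dotProduct_sub, dotProduct_smul, hρ, Matrix.smul_mulVec, dotProduct_smul,
          quadJ, quadI d v]
        push_cast [smul_eq_mul]
        ring
      rw [hval, quadI d v, Complex.ofReal_re, Complex.ofReal_re]
      set t := Complex.normSq (∑ i, v i) with htdef
      set u := ∑ i, Complex.normSq (v i) with hudef
      have h0 : 0 ≤ t := Complex.normSq_nonneg _
      have h0' : 0 ≤ u := Finset.sum_nonneg fun i _ => Complex.normSq_nonneg _
      have hcs : t ≤ d * u := cs_helper d v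
      rw [abs_le]
      constructor
      · nlinarith [mul_nonneg (inv_nonneg.mpr hdR.le) h0]
      · have h1 : (d:ℝ)⁻¹ * t ≤ u := by
          rw [inv_mul_le_iff₀ hdR]
          exact hcs
        nlinarith
    have hρρ : ρ * ρ = ρ := by
      ext i j
      simp [hρdef, mul_apply, Finset.sum_const]
      field_simp
    have htrρ : ρ.trace = 1 := by
      simp [hρdef, Matrix.trace, Matrix.diag, Finset.sum_const]
      field_simp
    have htrσρ : (σ * ρ).trace = ((d:ℂ))⁻¹ := by
      have h2 : ∀ i : Fin d, (σ * ρ) i i = σ i i * ((d:ℂ))⁻¹ := by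
        intro i
        rw [mul_apply]
        rw [Finset.sum_eq_single i]
        · simp [hρdef, one_div]
        · intro k _ hk
          rw [hdiag (Ne.symm hk)]
          ring
        · intro h; exact absurd (Finset.mem_univ i) h
      calc (σ * ρ).trace = ∑ i, (σ * ρ) i i := rfl
        _ = ∑ i, σ i i * ((d:ℂ))⁻¹ := Finset.sum_congr rfl fun i _ => h2 i
        _ = σ.trace * ((d:ℂ))⁻¹ := by rw [← Finset.sum_mul]; rfl
        _ = ((d:ℂ))⁻¹ := by rw [htr1, one_mul]
    have htrM : M.trace = 0 := by
      rw [hMdef, Matrix.trace_sub, htrρ, htr1, sub_self]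
    have htrMρ : (M * ρ).trace = 1 - ((d:ℂ))⁻¹ := by
      rw [hMdef, Matrix.sub_mul, Matrix.trace_sub, hρρ, htrρ, htrσρ]
    have htrMA : ((M * A).trace).re = 2 - 2 / d := by
      have e : M * A = (2:ℂ) • (M * ρ) - M := by
        rw [hAdef, Matrix.mul_sub, Matrix.mul_one, mul_smul_comm]
      rw [e, Matrix.trace_sub, Matrix.trace_smul, htrM, htrMρ, sub_zero, smul_eq_mul]
      have e2 : (2:ℂ) * (1 - ((d:ℂ))⁻¹) = ((2 - 2/(d:ℝ) : ℝ) : ℂ) := by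
        push_cast
        ring
      rw [e2, Complex.ofReal_re]
    calc (2 - 2 / d : ℝ) = ((M * A).trace).re := htrMA.symm
      _ ≤ traceNorm M := retrace_mul_le_traceNorm M A hMherm hA
      _ = traceNorm ((Matrix.of fun _ _ : Fin d => (1 / d : ℂ)) - σ) := by rw [hMdef, hρdef]
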